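/- Let T and S be bounded linear operators on a complex Hilbert space H. Then ‖ |T| |S| ‖ = ‖T S*‖, where |T| = (T*T)^{1/2} and ‖·‖ is the operator norm. -/

import Mathlib

set_option synthInstance.maxHeartbeats 1000000
open ContinuousLinearMap

/-- `‖ |T| |S| ‖ = ‖T S†‖`, where `|T| = (T† T)^{1/2}`. -/
theorem norm_abs_mul_abs {H : Type*} [NormedAddCommGroup H] [InnerProductSpace ℂ H]
    [CompleteSpace H] (T S : H →L[ℂ] H) :
    ‖CFC.sqrt (adjoint T * T) * CFC.sqrt (adjoint S * S)‖ = ‖T * adjoint S‖ := by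
  rw [← star_eq_adjoint T, ← star_eq_adjoint S]
  set a := CFC.sqrt (star T * T) with ha_def
  set b := CFC.sqrt (star S * S) with hb_def
  have ha : (0 : H →L[ℂ] H) ≤ a := CFC.sqrt_nonneg _
  have hb : (0 : H →L[ℂ] H) ≤ b := CFC.sqrt_nonneg _
  have ha2 : a * a = star T * T := by
    rw [ha_def, ← sq]; exact CFC.sq_sqrt _ (star_mul_self_nonneg T)
  have hb2 : b * b = star S * S := by
    rw [hb_def, ← sq]; exact CFC.sq_sqrt _ (star_mul_self_nonneg S)
  have hsa : star a = a := ha.isSelfAdjoint.star_eq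
  have hsb : star b = b := hb.isSelfAdjoint.star_eq
  have e1 : star (a * b) * (a * b) = star (T * b) * (T * b) := by
    simp only [star_mul, hsa, hsb]
    calc b * a * (a * b) = b * (a * a) * b := by noncomm_ring
    _ = b * star T * (T * b) := by rw [ha2]; noncomm_ring
  have e2 : star (b * star T) * (b * star T) = star (S * star T) * (S * star T) := by
    simp only [star_mul, hsb, star_star]
    calc T * b * (b * star T) = T * (b * b) * star T := by noncomm_ring
    _ = T * star S * (S * star T) := by rw [hb2]; noncomm_ring
  have h1 : ‖a * b‖ * ‖a * b‖ = ‖T * b‖ * ‖T * b‖ := by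
    rw [← CStarRing.norm_star_mul_self, ← CStarRing.norm_star_mul_self (x := T * b), e1]
  have h2 : ‖T * b‖ = ‖b * star T‖ := by
    rw [← norm_star (b * star T), star_mul, star_star, hsb]
  have h3 : ‖b * star T‖ * ‖b * star T‖ = ‖S * star T‖ * ‖S * star T‖ := by
    rw [← CStarRing.norm_star_mul_self, ← CStarRing.norm_star_mul_self (x := S * star T), e2]
  have h4 : ‖S * star T‖ = ‖T * star S‖ := by
    rw [← norm_star (T * star S), star_mul, star_star]
  rw [h2] at h1
  have := h1.trans h3
  nlinarith [norm_nonneg (a * b), norm_nonneg (S * star T), h4]
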